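/- arXiv:2106.14872 — 2 statements merged into one kernel-verified Lean document; each statement's English description precedes it below -/
import Mathlib

section
/- Spectral properties, part 3: Let X be a complex infinite-dimensional separable Banach space and let A be a densely defined linear operator in X such that every power A^n (n ∈ ℕ) is a closed operator, and suppose there exist a set Y ⊆ C^∞(A) dense in X and a mapping B : Y → Y with ABf = f for every f ∈ Y, such that for every f ∈ Y and every α ∈ (0,1) there exists c = c(f,α) > 0 with max(‖A^n f‖, ‖B^n f‖) ≤ c·α^n for all n ∈ ℕ (equivalently, r(A,f) = r(B,f) = 0 for all f ∈ Y). Then for every γ ∈ (0,1) there exists M ∈ ℕ such that for all n ≥ M the annulus {λ ∈ ℂ : γ^n ≤ |λ| ≤ 1/γ^n} is contained in σ_p(A^n); in particular, for every λ ∈ ℂ \ {0} there exists M ∈ ℕ such that λ ∈ σ_p(A^n) for all n ≥ M. -/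
open Filter Topology TopologicalSpace

/-- The domain of the `n`-th power of the operator `A` with domain `D`:
`x ∈ D(Aⁿ)` iff `Aᵏx ∈ D(A)` for all `k < n`. -/
def opDom {X : Type*} (A : X → X) (D : Set X) (n : ℕ) : Set X :=
  {x | ∀ k < n, A^[k] x ∈ D}

/-- `C^∞(A) = ⋂ₙ D(Aⁿ)`. -/
def opCinf {X : Type*} (A : X → X) (D : Set X) : Set X :=
  {x | ∀ k : ℕ, A^[k] x ∈ D}

/-- `A` is linear on the subspace `D`. -/
def IsLinearOn (𝕜 : Type*) {X : Type*} [RCLike 𝕜] [NormedAddCommGroup X]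
    [NormedSpace 𝕜 X] (A : X → X) (D : Set X) : Prop :=
  (∀ x ∈ D, ∀ y ∈ D, A (x + y) = A x + A y) ∧
  (∀ (c : 𝕜), ∀ x ∈ D, A (c • x) = c • A x)

/-- The `n`-th power of `A` (with domain `D`) is a closed operator:
its graph is closed in `X × X`. -/
def ClosedPower {X : Type*} [NormedAddCommGroup X] (A : X → X) (D : Set X)
    (n : ℕ) : Prop :=
  IsClosed {p : X × X | p.1 ∈ opDom A D n ∧ p.2 = A^[n] p.1}

/-- A hypercyclic vector for `A`: a nonzero `f ∈ C^∞(A)` with dense orbit. -/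
def HypercyclicVec {X : Type*} [NormedAddCommGroup X] (A : X → X) (D : Set X)
    (f : X) : Prop :=
  f ∈ opCinf A D ∧ f ≠ 0 ∧ Dense (Set.range fun n : ℕ => A^[n] f)

/-- `A` (with domain `D`) is hypercyclic. -/
def HypercyclicOp {X : Type*} [NormedAddCommGroup X] (A : X → X) (D : Set X) :
    Prop :=
  ∃ f, HypercyclicVec A D f

/-- `f` is a periodic point of `A`: `f ∈ D(A^N)` and `A^N f = f` for some `N ≥ 1`. -/
def PeriodicPt {X : Type*} (A : X → X) (D : Set X) (f : X) : Prop :=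
  ∃ N : ℕ, 0 < N ∧ f ∈ opDom A D N ∧ A^[N] f = f

/-- `A` (with domain `D`) is chaotic: hypercyclic with a dense set of periodic
points. -/
def ChaoticOp {X : Type*} [NormedAddCommGroup X] (A : X → X) (D : Set X) : Prop :=
  HypercyclicOp A D ∧ Dense {f | PeriodicPt A D f}

/-- The local quantity `r(T,f) = limsup ‖Tⁿ f‖^{1/n}`, computed in `ℝ≥0∞`. -/
noncomputable def orbitRad {X : Type*} [NormedAddCommGroup X] (T : X → X)
    (f : X) : ENNReal :=
  Filter.limsup (fun n : ℕ => (‖T^[n] f‖₊ : ENNReal) ^ (1 / (n : ℝ))) Filter.atTop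

/-- The point spectrum of the `n`-th power of `A` (with domain `D`):
`λ ∈ σ_p(Aⁿ)` iff `Aⁿ g = λ g` for some nonzero `g ∈ D(Aⁿ)`. -/
def pointSpecPow {X : Type*} [NormedAddCommGroup X] [NormedSpace ℂ X]
    (A : X → X) (D : Set X) (n : ℕ) : Set ℂ :=
  {l | ∃ g, g ≠ 0 ∧ g ∈ opDom A D n ∧ A^[n] g = l • g}

section Aux
set_option linter.unusedSectionVars false
variable {X : Type*} [NormedAddCommGroup X] [NormedSpace ℂ X]

lemma opCinf_iterate_mem {A : X → X} {D : Set X} {x : X} (hx : x ∈ opCinf A D) (k : ℕ) :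
    A^[k] x ∈ opCinf A D := fun j => by
  rw [← Function.iterate_add_apply]
  exact hx (j + k)

variable {D : Submodule ℂ X} {A : X → X}

lemma iter_add (hlin : IsLinearOn ℂ A (D : Set X)) {x y : X}
    (hx : x ∈ opCinf A (D : Set X)) (hy : y ∈ opCinf A (D : Set X)) :
    ∀ k : ℕ, A^[k] (x + y) = A^[k] x + A^[k] y := by
  intro k
  induction k with
  | zero => simp
  | succ k ih =>
    rw [Function.iterate_succ_apply', Function.iterate_succ_apply',
      Function.iterate_succ_apply', ih]
    exact hlin.1 _ (hx k) _ (hy k)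

lemma opCinf_add (hlin : IsLinearOn ℂ A (D : Set X)) {x y : X}
    (hx : x ∈ opCinf A (D : Set X)) (hy : y ∈ opCinf A (D : Set X)) :
    x + y ∈ opCinf A (D : Set X) := fun k => by
  rw [iter_add hlin hx hy k]; exact D.add_mem (hx k) (hy k)

lemma iter_smul (hlin : IsLinearOn ℂ A (D : Set X)) {x : X}
    (hx : x ∈ opCinf A (D : Set X)) (c : ℂ) :
    ∀ k : ℕ, A^[k] (c • x) = c • A^[k] x := by
  intro k
  induction k with
  | zero => simp
  | succ k ih =>
    rw [Function.iterate_succ_apply', Function.iterate_succ_apply', ih]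
    exact hlin.2 c _ (hx k)

lemma opCinf_smul (hlin : IsLinearOn ℂ A (D : Set X)) {x : X}
    (hx : x ∈ opCinf A (D : Set X)) (c : ℂ) :
    c • x ∈ opCinf A (D : Set X) := fun k => by
  rw [iter_smul hlin hx c k]; exact D.smul_mem c (hx k)

lemma iter_AB {Y : Set X} {B : X → X} (hBmaps : Set.MapsTo B Y Y)
    (hAB : ∀ f ∈ Y, A (B f) = f) {y : X} (hy : y ∈ Y) :
    ∀ m : ℕ, A^[m] (B^[m] y) = y := by
  intro m
  induction m with
  | zero => simp
  | succ m ih =>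
    rw [Function.iterate_succ_apply' B, Function.iterate_succ_apply A,
      hAB _ (hBmaps.iterate m hy), ih]

lemma geom_bound {c r : ℝ} (hc : 0 ≤ c) (hr0 : 0 ≤ r) (hrh : r ≤ 1/2)
    [CompleteSpace X] (u : ℕ → X) (hu : ∀ k, ‖u k‖ ≤ c * r ^ (k+1)) :
    Summable u ∧ ‖∑' k, u k‖ ≤ 2 * c * r := by
  have hr1 : r < 1 := lt_of_le_of_lt hrh (by norm_num)
  have hfe : (fun k : ℕ => c * r ^ (k+1)) = fun k => (c * r) * r ^ k := by
    funext k; ring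
  have hgeo : Summable (fun k : ℕ => c * r ^ (k+1)) := by
    rw [hfe]
    exact (summable_geometric_of_lt_one hr0 hr1).mul_left (c * r)
  have hnorm : Summable (fun k => ‖u k‖) :=
    hgeo.of_nonneg_of_le (fun k => norm_nonneg _) hu
  refine ⟨Summable.of_norm hnorm, ?_⟩
  calc ‖∑' k, u k‖ ≤ ∑' k, ‖u k‖ := norm_tsum_le_tsum_norm hnorm
    _ ≤ ∑' k : ℕ, c * r ^ (k+1) := Summable.tsum_le_tsum hu hnorm hgeo
    _ = (c * r) * (1 - r)⁻¹ := by
        rw [hfe, tsum_mul_left, tsum_geometric_of_lt_one hr0 hr1]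
    _ ≤ 2 * c * r := by
        have h2 : (1 - r)⁻¹ ≤ 2 := by
          rw [inv_le_comm₀ (by linarith) (by norm_num)]
          linarith
        nlinarith [mul_nonneg hc hr0]

lemma eigen_construct [CompleteSpace X]
    (hlin : IsLinearOn ℂ A (D : Set X))
    {Y : Set X} (hYsub : Y ⊆ opCinf A (D : Set X))
    {B : X → X} (hBmaps : Set.MapsTo B Y Y)
    (hAB : ∀ f ∈ Y, A (B f) = f)
    {f : X} (hf : f ∈ Y) (hf0 : f ≠ 0)
    {γ : ℝ} (hγ0 : 0 < γ) (hγ1 : γ < 1)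
    {c : ℝ} (hc : 0 < c)
    (hbound : ∀ k : ℕ, 0 < k → max ‖A^[k] f‖ ‖B^[k] f‖ ≤ c * (γ / 2) ^ k)
    {n : ℕ} (hn : 0 < n) (hcln : ClosedPower A (D : Set X) n)
    (hsmall : 4 * c * (1 / 2 : ℝ) ^ n < ‖f‖)
    {l : ℂ} (hl1 : γ ^ n ≤ ‖l‖) (hl2 : ‖l‖ ≤ 1 / γ ^ n) :
    l ∈ pointSpecPow A (D : Set X) n := by
  have hγn : (0:ℝ) < γ ^ n := pow_pos hγ0 n
  have hl0 : l ≠ 0 := by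
    intro h; rw [h, norm_zero] at hl1; linarith
  have hfC : f ∈ opCinf A (D : Set X) := hYsub hf
  set r : ℝ := (1/2 : ℝ) ^ n with hr_def
  have hr0 : (0:ℝ) ≤ r := by positivity
  have hrh : r ≤ 1/2 := by
    calc r ≤ (1/2:ℝ)^1 := pow_le_pow_of_le_one (by norm_num) (by norm_num) hn
    _ = 1/2 := pow_one _
  have hr1 : r < 1 := lt_of_le_of_lt hrh (by norm_num)
  have key : (γ ^ n)⁻¹ * (γ/2) ^ n = r := by
    rw [hr_def, div_pow, div_pow]
    field_simp
    simp
  have hlinv : ‖l‖⁻¹ ≤ (γ ^ n)⁻¹ := by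
    exact inv_anti₀ hγn hl1
  have hlup : ‖l‖ ≤ (γ ^ n)⁻¹ := by rwa [← one_div]
  set a : ℕ → X := fun k => (l⁻¹) ^ k • A^[n * k] f with ha_def
  set b : ℕ → X := fun k => l ^ k • B^[n * k] f with hb_def
  have hAnorm : ∀ k : ℕ, 0 < k → ‖A^[n * k] f‖ ≤ c * ((γ/2) ^ n) ^ k := by
    intro k hk
    rw [← pow_mul]
    exact le_trans (le_max_left _ _) (hbound _ (Nat.mul_pos hn hk))
  have hBnorm : ∀ k : ℕ, 0 < k → ‖B^[n * k] f‖ ≤ c * ((γ/2) ^ n) ^ k := by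
    intro k hk
    rw [← pow_mul]
    exact le_trans (le_max_right _ _) (hbound _ (Nat.mul_pos hn hk))
  have ha_norm : ∀ k : ℕ, ‖a (k+1)‖ ≤ c * r ^ (k+1) := by
    intro k
    calc ‖a (k+1)‖ = (‖l‖⁻¹)^(k+1) * ‖A^[n*(k+1)] f‖ := by
          simp [ha_def, norm_smul, norm_pow, norm_inv]
      _ ≤ ((γ^n)⁻¹)^(k+1) * (c * ((γ/2)^n)^(k+1)) := by
          have := hAnorm (k+1) k.succ_pos
          gcongr
      _ = c * ((γ^n)⁻¹ * (γ/2)^n) ^ (k+1) := by rw [mul_pow]; ring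
      _ = c * r ^ (k+1) := by rw [key]
  have hb_norm : ∀ k : ℕ, ‖b (k+1)‖ ≤ c * r ^ (k+1) := by
    intro k
    calc ‖b (k+1)‖ = ‖l‖^(k+1) * ‖B^[n*(k+1)] f‖ := by
          simp [hb_def, norm_smul, norm_pow]
      _ ≤ ((γ^n)⁻¹)^(k+1) * (c * ((γ/2)^n)^(k+1)) := by
          have := hBnorm (k+1) k.succ_pos
          gcongr
      _ = c * ((γ^n)⁻¹ * (γ/2)^n) ^ (k+1) := by rw [mul_pow]; ring
      _ = c * r ^ (k+1) := by rw [key]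
  obtain ⟨ha_sum, ha_bnd⟩ := geom_bound hc.le hr0 hrh _ ha_norm
  obtain ⟨hb_sum, hb_bnd⟩ := geom_bound hc.le hr0 hrh _ hb_norm
  set Sa := ∑' k, a (k+1) with hSa_def
  set Sb := ∑' k, b (k+1) with hSb_def
  set g : X := f + Sa + Sb with hg_def
  have hg0 : g ≠ 0 := by
    intro h
    rw [hg_def, add_assoc] at h
    have h' : Sa + Sb = -f := (neg_eq_of_add_eq_zero_right h).symm
    have hlt : ‖Sa + Sb‖ < ‖f‖ := by
      calc ‖Sa + Sb‖ ≤ ‖Sa‖ + ‖Sb‖ := norm_add_le _ _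
        _ ≤ 2*c*r + 2*c*r := add_le_add ha_bnd hb_bnd
        _ = 4*c*(1/2:ℝ)^n := by rw [← hr_def]; ring
        _ < ‖f‖ := hsmall
    rw [h', norm_neg] at hlt
    exact lt_irrefl _ hlt
  set p : ℕ → X := fun m =>
    f + (∑ k ∈ Finset.range m, a (k+1)) + (∑ k ∈ Finset.range m, b (k+1)) with hp_def
  have haC : ∀ k, a k ∈ opCinf A (D : Set X) := fun k =>
    opCinf_smul hlin (opCinf_iterate_mem hfC _) _
  have hbC : ∀ k, b k ∈ opCinf A (D : Set X) := fun k =>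
    opCinf_smul hlin (hYsub (hBmaps.iterate _ hf)) _
  have hpc : ∀ m, p m ∈ opCinf A (D : Set X) := by
    intro m
    induction m with
    | zero => simpa [hp_def] using hfC
    | succ m ih =>
      have hstep : p (m+1) = p m + a (m+1) + b (m+1) := by
        simp only [hp_def, Finset.sum_range_succ]; abel
      rw [hstep]
      exact opCinf_add hlin (opCinf_add hlin ih (haC _)) (hbC _)
  have hAa : ∀ k : ℕ, A^[n] (a (k+1)) = (l⁻¹)^(k+1) • A^[n*(k+2)] f := by
    intro k
    simp only [ha_def]
    rw [iter_smul hlin (opCinf_iterate_mem hfC _) _ n, ← Function.iterate_add_apply,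
      show n + n*(k+1) = n*(k+2) by ring]
  have hAb : ∀ k : ℕ, A^[n] (b (k+1)) = l^(k+1) • B^[n*k] f := by
    intro k
    simp only [hb_def]
    rw [iter_smul hlin (hYsub (hBmaps.iterate _ hf)) _ n,
      show n*(k+1) = n + n*k by ring, Function.iterate_add_apply]
    congr 1
    exact iter_AB hBmaps hAB (hBmaps.iterate _ hf) n
  have hApm : ∀ m, A^[n] (p m) =
      l • p m + (l⁻¹)^m • A^[n*(m+1)] f - l^(m+1) • B^[n*m] f := by
    intro m
    induction m with
    | zero =>
      simp only [hp_def, hb_def, Finset.range_zero, Finset.sum_empty, add_zero, pow_zero,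
        one_smul, Nat.mul_zero, Function.iterate_zero, id_eq, pow_one, Nat.zero_add, mul_one]
      abel
    | succ m ih =>
      have hstep : p (m+1) = p m + a (m+1) + b (m+1) := by
        simp only [hp_def, Finset.sum_range_succ]; abel
      have hidx : n * (m+1+1) = n * (m+2) := by ring
      have hpow : m + 1 + 1 = m + 2 := rfl
      rw [hstep, iter_add hlin (opCinf_add hlin (hpc m) (haC (m+1))) (hbC (m+1)) n,
        iter_add hlin (hpc m) (haC (m+1)) n, ih, hAa m, hAb m, hidx, hpow]
      have e1 : l • a (m+1) = (l⁻¹)^m • A^[n*(m+1)] f := by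
        simp only [ha_def, smul_smul]
        congr 1
        rw [pow_succ', ← mul_assoc, mul_inv_cancel₀ hl0, one_mul]
      have e2 : l • b (m+1) = l^(m+2) • B^[n*(m+1)] f := by
        simp only [hb_def, smul_smul, ← pow_succ']
      rw [smul_add l (p m + a (m+1)) (b (m+1)), smul_add l (p m) (a (m+1)), e1, e2]
      abel
  have hptend : Tendsto p atTop (𝓝 g) := by
    rw [hg_def]
    exact (tendsto_const_nhds.add ha_sum.hasSum.tendsto_sum_nat).add
      hb_sum.hasSum.tendsto_sum_nat
  have he1 : Tendsto (fun m => (l⁻¹)^m • A^[n*(m+1)] f) atTop (𝓝 (0:X)) := by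
    apply squeeze_zero_norm (a := fun m => (c * (γ/2)^n) * r^m)
    · intro m
      calc ‖(l⁻¹)^m • A^[n*(m+1)] f‖ = (‖l‖⁻¹)^m * ‖A^[n*(m+1)] f‖ := by
            simp [norm_smul, norm_pow, norm_inv]
        _ ≤ ((γ^n)⁻¹)^m * (c * ((γ/2)^n)^(m+1)) := by
            have := hAnorm (m+1) m.succ_pos
            gcongr
        _ = (c * (γ/2)^n) * ((γ^n)⁻¹ * (γ/2)^n)^m := by rw [pow_succ, mul_pow]; ring
        _ = (c * (γ/2)^n) * r^m := by rw [key]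
    · simpa using (tendsto_pow_atTop_nhds_zero_of_lt_one hr0 hr1).const_mul (c * (γ/2)^n)
  have he2 : Tendsto (fun m => l^(m+1) • B^[n*m] f) atTop (𝓝 (0:X)) := by
    apply squeeze_zero_norm' (a := fun m => (c * (γ^n)⁻¹) * r^m)
    · filter_upwards [eventually_ge_atTop 1] with m hm
      calc ‖l^(m+1) • B^[n*m] f‖ = ‖l‖^(m+1) * ‖B^[n*m] f‖ := by
            simp [norm_smul, norm_pow]
        _ ≤ ((γ^n)⁻¹)^(m+1) * (c * ((γ/2)^n)^m) := by
            have := hBnorm m hm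
            gcongr
        _ = (c * (γ^n)⁻¹) * ((γ^n)⁻¹ * (γ/2)^n)^m := by rw [pow_succ, mul_pow]; ring
        _ = (c * (γ^n)⁻¹) * r^m := by rw [key]
    · simpa using (tendsto_pow_atTop_nhds_zero_of_lt_one hr0 hr1).const_mul (c * (γ^n)⁻¹)
  have hAtend : Tendsto (fun m => A^[n] (p m)) atTop (𝓝 (l • g)) := by
    simp only [hApm]
    have := ((hptend.const_smul l).add he1).sub he2
    simpa using this
  have hmem : (g, l • g) ∈
      {q : X × X | q.1 ∈ opDom A (D : Set X) n ∧ q.2 = A^[n] q.1} := by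
    apply hcln.mem_of_tendsto (hptend.prodMk_nhds hAtend)
    exact Filter.Eventually.of_forall fun m => ⟨fun k _ => hpc m k, rfl⟩
  exact ⟨g, hg0, hmem.1, hmem.2.symm⟩

end Aux

/-- **Spectral properties, part 3.** -/
theorem spectral_properties_part3
    {X : Type*} [NormedAddCommGroup X] [NormedSpace ℂ X]
    [CompleteSpace X] [SeparableSpace X]
    (hinfdim : ¬ FiniteDimensional ℂ X)
    (D : Submodule ℂ X) (A : X → X)
    (hlin : IsLinearOn ℂ A (D : Set X))
    (hdd : Dense (D : Set X))
    (hcl : ∀ n : ℕ, 0 < n → ClosedPower A (D : Set X) n)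
    (Y : Set X) (hYsub : Y ⊆ opCinf A (D : Set X)) (hYdense : Dense Y)
    (B : X → X) (hBmaps : Set.MapsTo B Y Y)
    (h1 : ∀ f ∈ Y, A (B f) = f)
    (h2 : ∀ f ∈ Y, ∀ α ∈ Set.Ioo (0 : ℝ) 1, ∃ c > 0, ∀ n : ℕ, 0 < n →
      max ‖A^[n] f‖ ‖B^[n] f‖ ≤ c * α ^ n) :
    (∀ γ : ℝ, 0 < γ → γ < 1 →
      ∃ M : ℕ, 0 < M ∧ ∀ n ≥ M, ∀ l : ℂ, γ ^ n ≤ ‖l‖ → ‖l‖ ≤ 1 / γ ^ n →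
        l ∈ pointSpecPow A (D : Set X) n) ∧
    (∀ l : ℂ, l ≠ 0 →
      ∃ M : ℕ, 0 < M ∧ ∀ n ≥ M, l ∈ pointSpecPow A (D : Set X) n) := by
  have hnt : Nontrivial X := by
    by_contra h
    rw [not_nontrivial_iff_subsingleton] at h
    exact hinfdim inferInstance
  obtain ⟨f, hf, hf0⟩ : ∃ f ∈ Y, f ≠ 0 := by
    obtain ⟨x, hx⟩ := exists_ne (0 : X)
    obtain ⟨f, hfY, hfne⟩ := hYdense.exists_mem_open isOpen_compl_singleton ⟨x, hx⟩
    exact ⟨f, hfY, hfne⟩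
  have hfpos : (0:ℝ) < ‖f‖ := norm_pos_iff.mpr hf0
  have part1 : ∀ γ : ℝ, 0 < γ → γ < 1 →
      ∃ M : ℕ, 0 < M ∧ ∀ n ≥ M, ∀ l : ℂ, γ ^ n ≤ ‖l‖ → ‖l‖ ≤ 1 / γ ^ n →
        l ∈ pointSpecPow A (D : Set X) n := by
    intro γ hγ0 hγ1
    obtain ⟨c, hc, hbound⟩ := h2 f hf (γ/2) ⟨by positivity, by linarith⟩
    obtain ⟨M₀, hM₀⟩ := exists_pow_lt_of_lt_one
      (div_pos hfpos (by linarith : (0:ℝ) < 4*c)) (by norm_num : (1/2:ℝ) < 1)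
    refine ⟨M₀ + 1, Nat.succ_pos _, fun n hn l hl1 hl2 => ?_⟩
    have hn0 : 0 < n := lt_of_lt_of_le (Nat.succ_pos _) hn
    have hsmall : 4 * c * (1/2:ℝ)^n < ‖f‖ := by
      have hmono : ((1:ℝ)/2)^n ≤ (1/2)^M₀ :=
        pow_le_pow_of_le_one (by norm_num) (by norm_num) (by omega)
      rw [lt_div_iff₀ (by linarith : (0:ℝ) < 4*c)] at hM₀
      nlinarith
    exact eigen_construct hlin hYsub hBmaps h1 hf hf0 hγ0 hγ1 hc hbound hn0
      (hcl n hn0) hsmall hl1 hl2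
  refine ⟨part1, fun l hl0 => ?_⟩
  obtain ⟨M, hM, hspec⟩ := part1 (1/2) (by norm_num) (by norm_num)
  have hl : (0:ℝ) < ‖l‖ := norm_pos_iff.mpr hl0
  obtain ⟨K1, hK1⟩ := exists_pow_lt_of_lt_one hl (by norm_num : (1/2:ℝ) < 1)
  obtain ⟨K2, hK2⟩ := pow_unbounded_of_one_lt ‖l‖ (by norm_num : (1:ℝ) < 2)
  refine ⟨max M (max K1 K2), lt_of_lt_of_le hM (le_max_left _ _), fun n hn => ?_⟩
  have hnM : M ≤ n := le_trans (le_max_left _ _) hn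
  have hnK1 : K1 ≤ n := le_trans (le_trans (le_max_left _ _) (le_max_right _ _)) hn
  have hnK2 : K2 ≤ n := le_trans (le_trans (le_max_right _ _) (le_max_right _ _)) hn
  apply hspec n hnM l
  · exact le_trans (pow_le_pow_of_le_one (by norm_num) (by norm_num) hnK1) hK1.le
  · have h2n : (1:ℝ)/(1/2)^n = 2^n := by
      rw [one_div, ← inv_pow]; norm_num
    rw [h2n]
    exact le_trans hK2.le (pow_le_pow_right₀ one_le_two hnK2)
end

section
/- Spectral properties, part 7 (eigenspace isomorphism): Let X be a complex infinite-dimensional separable Banach space and let A be a densely defined linear operator in X such that every power A^n (n ∈ ℕ) is a closed operator. Suppose B : X → X is a bounded linear operator such that: for every f ∈ X, Bf ∈ D(A) and A(Bf) = f; for every n ∈ ℕ, ker A^n ∩ R(B^n) = {0}; there exists a dense set Y ⊆ C^∞(A) with B(Y) ⊆ Y and Y ⊆ ⋃_{n≥1} ker A^n; and for every f ∈ X, limsup_{n→∞} ‖B^n f‖^{1/n} = 0. Then for every n ∈ ℕ and every λ ∈ ℂ, the map sending f ∈ ker A^n to f_{n,λ} := Σ_{m=0}^∞ λ^m B^{mn}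 f (with 0^0 := 1) is a well-defined linear isomorphism from ker A^n onto ker(A^n − λI); in particular dim ker(A^n − λI) = dim ker A^n. -/
open Filter Topology TopologicalSpace

section Aux

variable {X : Type*} [NormedAddCommGroup X] [NormedSpace ℂ X]
variable {D : Submodule ℂ X} {A : X → X} {B : X →L[ℂ] X}

lemma aux_AB (hB1 : ∀ f : X, B f ∈ (D : Set X) ∧ A (B f) = f) :
    ∀ (j k : ℕ) (x : X), A^[j] ((⇑B)^[j + k] x) = (⇑B)^[k] x := by
  intro j
  induction j with
  | zero => simp
  | succ j ih =>
    intro k x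
    have h1 : (⇑B)^[j + 1 + k] x = B ((⇑B)^[j + k] x) := by
      rw [show j + 1 + k = (j + k) + 1 by ring, Function.iterate_succ_apply']
    rw [Function.iterate_succ_apply, h1, (hB1 _).2]
    exact ih k x

lemma aux_Bmem (hB1 : ∀ f : X, B f ∈ (D : Set X) ∧ A (B f) = f) :
    ∀ k, 0 < k → ∀ x : X, (⇑B)^[k] x ∈ (D : Set X) := by
  rintro (_ | k) hk x
  · exact absurd hk (lt_irrefl 0)
  · rw [Function.iterate_succ_apply']
    exact (hB1 _).1

lemma aux_BopDom (hB1 : ∀ f : X, B f ∈ (D : Set X) ∧ A (B f) = f)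
    {n k : ℕ} (hnk : n ≤ k) (x : X) : (⇑B)^[k] x ∈ opDom A (D : Set X) n := by
  intro j hj
  have h : j + (k - j) = k := by omega
  rw [show (⇑B)^[k] x = (⇑B)^[j + (k - j)] x by rw [h], aux_AB hB1]
  exact aux_Bmem hB1 _ (by omega) x

lemma aux_iter_add (hlin : IsLinearOn ℂ A (D : Set X)) {n : ℕ} {x y : X}
    (hx : x ∈ opDom A (D : Set X) n) (hy : y ∈ opDom A (D : Set X) n) :
    ∀ j ≤ n, A^[j] (x + y) = A^[j] x + A^[j] y := by
  intro j
  induction j with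
  | zero => simp
  | succ j ih =>
    intro hj
    have hj' : j < n := hj
    rw [Function.iterate_succ_apply', Function.iterate_succ_apply',
      Function.iterate_succ_apply', ih (le_of_lt hj'),
      hlin.1 _ (hx j hj') _ (hy j hj')]

lemma aux_iter_smul (hlin : IsLinearOn ℂ A (D : Set X)) {n : ℕ} {x : X} (c : ℂ)
    (hx : x ∈ opDom A (D : Set X) n) :
    ∀ j ≤ n, A^[j] (c • x) = c • A^[j] x := by
  intro j
  induction j with
  | zero => simp
  | succ j ih =>
    intro hj
    have hj' : j < n := hj
    rw [Function.iterate_succ_apply', Function.iterate_succ_apply',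
      ih (le_of_lt hj'), hlin.2 c _ (hx j hj')]

lemma aux_dom_add (hlin : IsLinearOn ℂ A (D : Set X)) {n : ℕ} {x y : X}
    (hx : x ∈ opDom A (D : Set X) n) (hy : y ∈ opDom A (D : Set X) n) :
    x + y ∈ opDom A (D : Set X) n := by
  intro k hk
  rw [aux_iter_add hlin hx hy k (le_of_lt hk)]
  exact D.add_mem (hx k hk) (hy k hk)

lemma aux_dom_smul (hlin : IsLinearOn ℂ A (D : Set X)) {n : ℕ} {x : X} (c : ℂ)
    (hx : x ∈ opDom A (D : Set X) n) : c • x ∈ opDom A (D : Set X) n := by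
  intro k hk
  rw [aux_iter_smul hlin c hx k (le_of_lt hk)]
  exact D.smul_mem c (hx k hk)

lemma aux_summable [CompleteSpace X]
    (hquasi : ∀ f : X, orbitRad (⇑B) f = 0) {n : ℕ} (hn : 0 < n) (l : ℂ) (f : X) :
    Summable (fun m : ℕ => l ^ m • (⇑B)^[m * n] f) := by
  set r : NNReal := (2 * (‖l‖₊ + 1))⁻¹ with hr
  have hr0 : 0 < r := by positivity
  have hr1 : (r : ℝ) < 1 := by
    rw [hr]
    push_cast
    rw [inv_lt_one_iff₀]
    right
    nlinarith [norm_nonneg l]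
  have hlr : ‖l‖ * (r : ℝ) < 1 := by
    rw [hr]
    push_cast
    rw [mul_inv_lt_iff₀ (by positivity), one_mul]
    nlinarith [norm_nonneg l]
  have hlim : ∀ᶠ m : ℕ in atTop,
      (‖(⇑B)^[m] f‖₊ : ENNReal) ^ (1 / (m : ℝ)) < (r : ENNReal) := by
    apply eventually_lt_of_limsup_lt
    · rw [← orbitRad, hquasi f]
      exact_mod_cast hr0
    · isBoundedDefault
  obtain ⟨M, hM⟩ := hlim.exists_forall_of_atTop
  have hbound : ∀ m : ℕ, 1 ≤ m → M ≤ m → ‖(⇑B)^[m] f‖ < (r : ℝ) ^ m := by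
    intro m hm1 hmM
    have h := hM m hmM
    have h2 := ENNReal.rpow_lt_rpow h (by positivity : (0:ℝ) < (m:ℝ))
    rw [← ENNReal.rpow_mul, one_div, inv_mul_cancel₀ (by exact_mod_cast (by omega : m ≠ 0)),
      ENNReal.rpow_one, ← ENNReal.coe_rpow_of_nonneg _ (by positivity),
      ENNReal.coe_lt_coe] at h2
    have h3 := NNReal.coe_lt_coe.2 h2
    rwa [NNReal.coe_rpow, Real.rpow_natCast, coe_nnnorm] at h3
  apply Summable.of_norm_bounded_eventually_nat (g := fun m => (‖l‖ * (r : ℝ)) ^ m)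
    (summable_geometric_of_lt_one (by positivity) hlr)
  filter_upwards [eventually_ge_atTop (max M 1)] with m hm
  have hm1 : 1 ≤ m := le_trans (le_max_right M 1) hm
  have hmn : m ≤ m * n := Nat.le_mul_of_pos_right m hn
  have h1 : ‖(⇑B)^[m * n] f‖ ≤ (r : ℝ) ^ m := by
    have := hbound (m * n) (by omega) (by omega)
    calc ‖(⇑B)^[m * n] f‖ ≤ (r : ℝ) ^ (m * n) := le_of_lt this
      _ ≤ (r : ℝ) ^ m := pow_le_pow_of_le_one (by positivity) (le_of_lt hr1) hmn
  rw [norm_smul, norm_pow, mul_pow]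
  exact mul_le_mul_of_nonneg_left h1 (by positivity)


lemma aux_iter_zero (hlin : IsLinearOn ℂ A (D : Set X)) : ∀ j : ℕ, A^[j] (0 : X) = 0 := by
  have hA0 : A (0 : X) = 0 := by
    have := hlin.2 0 0 (Submodule.zero_mem D)
    simpa using this
  intro j
  induction j with
  | zero => simp
  | succ j ih => rw [Function.iterate_succ_apply', ih, hA0]

lemma aux_dom_zero (hlin : IsLinearOn ℂ A (D : Set X)) {n : ℕ} :
    (0 : X) ∈ opDom A (D : Set X) n := by
  intro k _
  rw [aux_iter_zero hlin]
  exact Submodule.zero_mem D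

end Aux

/-- **Spectral properties, part 7: eigenspace isomorphism.**
The map `f ↦ ∑' m, λ^m • B^(mn) f` is a linear bijection from
`ker Aⁿ` onto `ker (Aⁿ - λI)`. -/
theorem spectral_properties_part7_eigenspace_isomorphism
    {X : Type*} [NormedAddCommGroup X] [NormedSpace ℂ X]
    [CompleteSpace X] [SeparableSpace X]
    (hinfdim : ¬ FiniteDimensional ℂ X)
    (D : Submodule ℂ X) (A : X → X)
    (hlin : IsLinearOn ℂ A (D : Set X))
    (hdd : Dense (D : Set X))
    (hcl : ∀ n : ℕ, 0 < n → ClosedPower A (D : Set X) n)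
    (B : X →L[ℂ] X)
    (hB1 : ∀ f : X, B f ∈ (D : Set X) ∧ A (B f) = f)
    (hkerR : ∀ n : ℕ, 0 < n → ∀ x, x ∈ opDom A (D : Set X) n → A^[n] x = 0 →
      (∃ y, (⇑B)^[n] y = x) → x = 0)
    (Y : Set X) (hYsub : Y ⊆ opCinf A (D : Set X)) (hYdense : Dense Y)
    (hBmaps : Set.MapsTo (⇑B) Y Y)
    (hYker : ∀ f ∈ Y, ∃ N : ℕ, ∀ n ≥ N, A^[n] f = 0)
    (hquasi : ∀ f : X, orbitRad (⇑B) f = 0) :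
    ∀ n : ℕ, 0 < n → ∀ l : ℂ,
      (∀ f, f ∈ opDom A (D : Set X) n → A^[n] f = 0 →
        Summable (fun m : ℕ => l ^ m • (⇑B)^[m * n] f)) ∧
      Set.BijOn (fun f => ∑' m : ℕ, l ^ m • (⇑B)^[m * n] f)
        {g | g ∈ opDom A (D : Set X) n ∧ A^[n] g = 0}
        {g | g ∈ opDom A (D : Set X) n ∧ A^[n] g = l • g} ∧
      (∀ f ∈ {g | g ∈ opDom A (D : Set X) n ∧ A^[n] g = 0},
       ∀ g ∈ {g | g ∈ opDom A (D : Set X) n ∧ A^[n] g = 0},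
        (∑' m : ℕ, l ^ m • (⇑B)^[m * n] (f + g)) =
          (∑' m : ℕ, l ^ m • (⇑B)^[m * n] f) + ∑' m : ℕ, l ^ m • (⇑B)^[m * n] g) ∧
      (∀ (c : ℂ), ∀ f ∈ {g | g ∈ opDom A (D : Set X) n ∧ A^[n] g = 0},
        (∑' m : ℕ, l ^ m • (⇑B)^[m * n] (c • f)) =
          c • ∑' m : ℕ, l ^ m • (⇑B)^[m * n] f) := by
  intro n hn l
  have hsum : ∀ f : X, Summable (fun m : ℕ => l ^ m • (⇑B)^[m * n] f) :=
    fun f => aux_summable hquasi hn l f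
  set Φ : X → X := fun f => ∑' m : ℕ, l ^ m • (⇑B)^[m * n] f with hΦ
  have hBlin : ∀ (k : ℕ) (x y : X), (⇑B)^[k] (x + y) = (⇑B)^[k] x + (⇑B)^[k] y := by
    intro k x y
    rw [← ContinuousLinearMap.coe_pow', map_add]
  have hBsmul : ∀ (k : ℕ) (c : ℂ) (x : X), (⇑B)^[k] (c • x) = c • (⇑B)^[k] x := by
    intro k c x
    rw [← ContinuousLinearMap.coe_pow', map_smul]
  have hadd : ∀ x y : X, Φ (x + y) = Φ x + Φ y := by
    intro x y
    rw [hΦ]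
    simp only [hBlin, smul_add]
    exact Summable.tsum_add (hsum x) (hsum y)
  have hsmul : ∀ (c : ℂ) (x : X), Φ (c • x) = c • Φ x := by
    intro c x
    rw [hΦ]
    simp only []
    calc (∑' m : ℕ, l ^ m • (⇑B)^[m * n] (c • x))
        = ∑' m : ℕ, c • (l ^ m • (⇑B)^[m * n] x) := by
          congr 1; funext m; rw [hBsmul, smul_comm]
      _ = c • ∑' m : ℕ, l ^ m • (⇑B)^[m * n] x := Summable.tsum_const_smul c (hsum x)
  have hAB : ∀ (m : ℕ) (x : X), A^[n] ((⇑B)^[(m + 1) * n] x) = (⇑B)^[m * n] x := by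
    intro m x
    rw [show (m + 1) * n = n + m * n by ring]
    exact aux_AB hB1 n (m * n) x
  -- maps to target
  have hmaps : ∀ f, f ∈ opDom A (D : Set X) n → A^[n] f = 0 →
      Φ f ∈ opDom A (D : Set X) n ∧ A^[n] (Φ f) = l • Φ f := by
    intro f hfd hfk
    set S : ℕ → X := fun M => ∑ m ∈ Finset.range M, l ^ m • (⇑B)^[m * n] f with hS
    have hterm : ∀ m : ℕ, (⇑B)^[m * n] f ∈ opDom A (D : Set X) n := by
      intro m
      rcases Nat.eq_zero_or_pos m with h | h
      · simpa [h] using hfd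
      · exact aux_BopDom hB1 (Nat.le_mul_of_pos_left n h) f
    have htd : ∀ m : ℕ, l ^ m • (⇑B)^[m * n] f ∈ opDom A (D : Set X) n :=
      fun m => aux_dom_smul hlin _ (hterm m)
    have hSdom : ∀ M, S M ∈ opDom A (D : Set X) n ∧
        A^[n] (S M) = ∑ m ∈ Finset.range M, l ^ m • A^[n] ((⇑B)^[m * n] f) := by
      intro M
      induction M with
      | zero =>
        refine ⟨by simpa [hS] using aux_dom_zero hlin, ?_⟩
        simp [hS, aux_iter_zero hlin]
      | succ M ih =>
        have h1 : S (M + 1) = S M + l ^ M • (⇑B)^[M * n] f := by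
          rw [hS]; exact Finset.sum_range_succ _ M
        constructor
        · rw [h1]; exact aux_dom_add hlin ih.1 (htd M)
        · rw [h1, aux_iter_add hlin ih.1 (htd M) n le_rfl, ih.2,
            aux_iter_smul hlin _ (hterm M) n le_rfl, Finset.sum_range_succ]
    have hASM : ∀ M, A^[n] (S (M + 1)) = l • S M := by
      intro M
      rw [(hSdom (M + 1)).2, Finset.sum_range_succ']
      have h0 : l ^ 0 • A^[n] ((⇑B)^[0 * n] f) = 0 := by
        simp [hfk]
      rw [h0, add_zero, hS, Finset.smul_sum]
      congr 1
      funext k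
      rw [hAB, pow_succ', mul_smul]
    have hΦtend : Tendsto S atTop (𝓝 (Φ f)) := (hsum f).hasSum.tendsto_sum_nat
    have h1 : Tendsto (fun M => S (M + 1)) atTop (𝓝 (Φ f)) :=
      hΦtend.comp (tendsto_add_atTop_nat 1)
    have h2 : Tendsto (fun M => l • S M) atTop (𝓝 (l • Φ f)) := hΦtend.const_smul l
    have hmem : (Φ f, l • Φ f) ∈
        {p : X × X | p.1 ∈ opDom A (D : Set X) n ∧ p.2 = A^[n] p.1} := by
      refine (hcl n hn).mem_of_tendsto (h1.prodMk_nhds h2)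
        (Eventually.of_forall fun M => ⟨(hSdom (M + 1)).1, (hASM M).symm⟩)
    exact ⟨hmem.1, hmem.2.symm⟩
  -- kernel of Φ on ker A^n is trivial
  have hzero : ∀ h : X, h ∈ opDom A (D : Set X) n → A^[n] h = 0 → Φ h = 0 → h = 0 := by
    intro h hd hk h0
    have e2 : ∀ m : ℕ, l ^ (m + 1) • (⇑B)^[(m + 1) * n] h
        = (B ^ n : X →L[ℂ] X) (l ^ m • (⇑B)^[m * n] (l • h)) := by
      intro m
      rw [map_smul, ContinuousLinearMap.coe_pow', ← Function.iterate_add_apply,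
        show n + m * n = (m + 1) * n by ring, hBsmul, smul_smul, ← pow_succ]
    have e1 : Φ h = h + (⇑B)^[n] (Φ (l • h)) := by
      show (∑' m : ℕ, l ^ m • (⇑B)^[m * n] h)
          = h + (⇑B)^[n] (∑' m : ℕ, l ^ m • (⇑B)^[m * n] (l • h))
      rw [Summable.tsum_eq_zero_add (hsum h)]
      congr 1
      · simp
      · rw [tsum_congr e2, ← ContinuousLinearMap.map_tsum _ (hsum (l • h)),
          ContinuousLinearMap.coe_pow']
    have e3 : (⇑B)^[n] (-(Φ (l • h))) = h := by
      rw [← ContinuousLinearMap.coe_pow', map_neg, ContinuousLinearMap.coe_pow']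
      exact neg_eq_of_add_eq_zero_left (by rw [← e1, h0])
    exact hkerR n hn h hd hk ⟨-(Φ (l • h)), e3⟩
  -- surjectivity witness
  have hsurj : ∀ g, g ∈ opDom A (D : Set X) n → A^[n] g = l • g →
      ∃ f, (f ∈ opDom A (D : Set X) n ∧ A^[n] f = 0) ∧ Φ f = g := by
    intro g hgd hgk
    have hBg : (⇑B)^[n] g ∈ opDom A (D : Set X) n := aux_BopDom hB1 le_rfl g
    have hABg : A^[n] ((⇑B)^[n] g) = g := by
      have := aux_AB hB1 n 0 g
      simpa using this
    refine ⟨g + (-l) • (⇑B)^[n] g,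
      ⟨aux_dom_add hlin hgd (aux_dom_smul hlin _ hBg), ?_⟩, ?_⟩
    · rw [aux_iter_add hlin hgd (aux_dom_smul hlin _ hBg) n le_rfl,
        aux_iter_smul hlin _ hBg n le_rfl, hgk, hABg, neg_smul, add_neg_cancel]
    · have key : ∀ m : ℕ, l ^ m • (⇑B)^[m * n] (g + (-l) • (⇑B)^[n] g)
          = (l ^ m • (⇑B)^[m * n] g) - (l ^ (m + 1) • (⇑B)^[(m + 1) * n] g) := by
        intro m
        rw [hBlin, hBsmul, ← Function.iterate_add_apply,
          show m * n + n = (m + 1) * n by ring, smul_add, smul_smul]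
        rw [mul_neg, neg_smul, ← pow_succ, sub_eq_add_neg]
      show (∑' m : ℕ, l ^ m • (⇑B)^[m * n] (g + (-l) • (⇑B)^[n] g)) = g
      calc (∑' m : ℕ, l ^ m • (⇑B)^[m * n] (g + (-l) • (⇑B)^[n] g))
          = ∑' m : ℕ, ((l ^ m • (⇑B)^[m * n] g) - (l ^ (m + 1) • (⇑B)^[(m + 1) * n] g)) :=
            tsum_congr key
        _ = (∑' m : ℕ, l ^ m • (⇑B)^[m * n] g)
            - ∑' m : ℕ, l ^ (m + 1) • (⇑B)^[(m + 1) * n] g :=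
            Summable.tsum_sub (hsum g)
              ((summable_nat_add_iff (f := fun m : ℕ => l ^ m • (⇑B)^[m * n] g) 1).2 (hsum g))
        _ = g := by
            rw [Summable.tsum_eq_zero_add (hsum g)]
            simp
  -- assemble
  refine ⟨fun f _ _ => hsum f, ⟨?_, ?_, ?_⟩, ?_, ?_⟩
  · intro f hf
    exact hmaps f hf.1 hf.2
  · intro f hf g hg heq
    have hgd' := aux_dom_smul hlin (-1 : ℂ) hg.1
    have hd : f - g ∈ opDom A (D : Set X) n := by
      rw [sub_eq_add_neg, ← neg_one_smul ℂ g]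
      exact aux_dom_add hlin hf.1 hgd'
    have hk : A^[n] (f - g) = 0 := by
      rw [sub_eq_add_neg, ← neg_one_smul ℂ g,
        aux_iter_add hlin hf.1 hgd' n le_rfl,
        aux_iter_smul hlin _ hg.1 n le_rfl, hf.2, hg.2]
      simp
    have hΦ0 : Φ (f - g) = 0 := by
      rw [sub_eq_add_neg, ← neg_one_smul ℂ g, hadd, hsmul]
      have : Φ f = Φ g := heq
      rw [this]
      simp
    exact sub_eq_zero.mp (hzero _ hd hk hΦ0)
  · intro g hg
    obtain ⟨f, hf, hfg⟩ := hsurj g hg.1 hg.2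
    exact ⟨f, hf, hfg⟩
  · intro f hf g hg
    exact hadd f g
  · intro c f hf
    exact hsmul c f
end
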